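/- Fix γ ∈ (0,1) and positive integers x_1,...,x_N with total sum T. Consider a bipartite graph with donors 1,...,N+1 and recipients 1,2,3, all recipients having normalization score 1. Donors 1..N are adjacent to recipients 1 and 2 with edge weights x_i; donor N+1 is adjacent only to recipient 3 with edge weight T/(2γ). Then there exists a nonempty γ-proportional matching if and only if the multiset {x_1,...,x_N} can be partitioned into two subsets each of sum T/2. -/

import Mathlib

theorem stmt_1 (γ : ℝ) (hγ0 : 0 < γ) (hγ1 : γ < 1)
    (N : ℕ) (x : Fin N → ℕ) (hx : ∀ i, 0 < x i)
    (T : ℕ) (hT : T = ∑ i, x i) :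
    (∃ (g : Fin N → Option (Fin 2)) (b : Bool),
      ((∃ i, g i ≠ none) ∨ b = true) ∧
      (let Y1 : ℝ := ∑ i ∈ Finset.univ.filter (fun i => g i = some 0), (x i : ℝ)
       let Y2 : ℝ := ∑ i ∈ Finset.univ.filter (fun i => g i = some 1), (x i : ℝ)
       let Y3 : ℝ := if b then (T : ℝ) / (2 * γ) else 0
       γ * Y1 ≤ Y2 ∧ γ * Y2 ≤ Y1 ∧ γ * Y1 ≤ Y3 ∧ γ * Y3 ≤ Y1 ∧
       γ * Y2 ≤ Y3 ∧ γ * Y3 ≤ Y2)) ↔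
    (∃ A : Finset (Fin N), 2 * ∑ i ∈ A, x i = T) := by
  have hγ : γ ≠ 0 := hγ0.ne'
  have hTnn : (0:ℝ) ≤ (T:ℝ) := Nat.cast_nonneg T
  constructor
  · rintro ⟨g, b, hne, h⟩
    obtain ⟨h1, h2, h3, h4, h5, h6⟩ := h
    set Y1 : ℝ := ∑ i ∈ Finset.univ.filter (fun i => g i = some 0), (x i : ℝ) with hY1def
    set Y2 : ℝ := ∑ i ∈ Finset.univ.filter (fun i => g i = some 1), (x i : ℝ) with hY2def
    have hY1nn : 0 ≤ Y1 := Finset.sum_nonneg fun i _ => Nat.cast_nonneg _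
    have hY2nn : 0 ≤ Y2 := Finset.sum_nonneg fun i _ => Nat.cast_nonneg _
    have hb : b = true := by
      by_contra hb
      simp only [Bool.not_eq_true] at hb
      subst hb
      simp only [if_neg (by simp : ¬ (false = true))] at h3 h5
      have hY1z : Y1 = 0 := le_antisymm (by nlinarith) hY1nn
      have hY2z : Y2 = 0 := le_antisymm (by nlinarith) hY2nn
      rcases hne with ⟨i, hi⟩ | hbad
      · match hgi : g i with
        | none => exact hi hgi
        | some j =>
          have hmem : j = 0 ∨ j = 1 := by omega
          have hxpos : (0:ℝ) < (x i : ℝ) := by exact_mod_cast hx i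
          rcases hmem with hj | hj <;> subst hj
          · have : (x i : ℝ) ≤ Y1 :=
              Finset.single_le_sum (f := fun i => (x i : ℝ))
                (fun i _ => Nat.cast_nonneg _) (by simp [hgi])
            linarith
          · have : (x i : ℝ) ≤ Y2 :=
              Finset.single_le_sum (f := fun i => (x i : ℝ))
                (fun i _ => Nat.cast_nonneg _) (by simp [hgi])
            linarith
      · simp at hbad
    subst hb
    simp only [if_true] at h3 h4 h5 h6
    have hz : γ * ((T:ℝ) / (2 * γ)) = (T:ℝ) / 2 := by field_simp
    rw [hz] at h4 h6
    have hdisj : Disjoint (Finset.univ.filter (fun i => g i = some 0))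
        (Finset.univ.filter (fun i => g i = some (1:Fin 2))) := by
      rw [Finset.disjoint_filter]
      intro i _ h0 h1
      rw [h0] at h1
      simp at h1
    have hsum : Y1 + Y2 ≤ (T:ℝ) := by
      rw [hY1def, hY2def, ← Finset.sum_union hdisj]
      calc ∑ i ∈ _, (x i : ℝ) ≤ ∑ i, (x i : ℝ) :=
            Finset.sum_le_sum_of_subset_of_nonneg (Finset.subset_univ _)
              (fun i _ _ => Nat.cast_nonneg _)
        _ = (T:ℝ) := by rw [hT]; push_cast; ring
    have hY1eq : Y1 = (T:ℝ) / 2 := by linarith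
    refine ⟨Finset.univ.filter (fun i => g i = some 0), ?_⟩
    have : ((2 * ∑ i ∈ Finset.univ.filter (fun i => g i = some 0), x i : ℕ) : ℝ)
        = (T:ℝ) := by push_cast; rw [← hY1def] at *; linarith [hY1eq]
    exact_mod_cast this
  · rintro ⟨A, hA⟩
    refine ⟨fun i => if i ∈ A then some 0 else some 1, true, Or.inr rfl, ?_⟩
    have h01 : (some (0:Fin 2)) ≠ some 1 := by decide
    have hf0 : Finset.univ.filter
        (fun i => (if i ∈ A then some (0:Fin 2) else some 1) = some 0) = A := by
      ext i; simp only [Finset.mem_filter, Finset.mem_univ, true_and]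
      split_ifs with h <;> simp [h, h01.symm]
    have hf1 : Finset.univ.filter
        (fun i => (if i ∈ A then some (0:Fin 2) else some 1) = some 1) = Aᶜ := by
      ext i; simp only [Finset.mem_filter, Finset.mem_univ, true_and, Finset.mem_compl]
      split_ifs with h <;> simp [h, h01]
    simp only [hf0, hf1, if_true]
    have hA' : (∑ i ∈ A, (x i : ℝ)) = (T:ℝ) / 2 := by
      have : ((2 * ∑ i ∈ A, x i : ℕ) : ℝ) = (T:ℝ) := by exact_mod_cast congrArg (Nat.cast : ℕ → ℝ) hA
      push_cast at this; linarith
    have hAc : (∑ i ∈ Aᶜ, (x i : ℝ)) = (T:ℝ) / 2 := by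
      have htot : (∑ i ∈ A, (x i : ℝ)) + (∑ i ∈ Aᶜ, (x i : ℝ)) = (T:ℝ) := by
        rw [← Finset.sum_union (disjoint_compl_right), Finset.union_compl, hT]
        push_cast; ring
      linarith
    rw [hA', hAc]
    have hz : γ * ((T:ℝ) / (2 * γ)) = (T:ℝ) / 2 := by field_simp
    have hge : (T:ℝ) / 2 ≤ (T:ℝ) / (2 * γ) := by
      rw [div_le_div_iff₀ (by norm_num) (by positivity)]
      nlinarith
    refine ⟨by nlinarith, by nlinarith, by nlinarith, hz.le, by nlinarith, hz.le⟩
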